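/- arXiv:2111.06379 — 2 statements merged into one kernel-verified Lean document; each statement's English description precedes it below -/
import Mathlib

section
/- Let A be a Grothendieck abelian category and let I = (I_n)_{n∈ℕ} be a tower (an object of the category of inverse sequences in A). If I is an injective object of the category of towers A^ℕ, then each I_n is injective in A and every structure map I_{n+1} → I_n is a split epimorphism. -/
open CategoryTheory CategoryTheory.Limits Opposite ZeroObject

namespace TowerAuxStmt0

variable {A : Type*} [Category A] [Abelian A]

/-- The object at level `m` of the truncated constant tower with value `Y` in degrees `≤ k`. -/
noncomputable def truncObj (k : ℕ) (Y : A) (m : ℕ) : A := if m ≤ k then Y else 0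

lemma truncObj_eq_of_le {k m : ℕ} (Y : A) (h : m ≤ k) : truncObj k Y m = Y := if_pos h

lemma isZero_truncObj {k m : ℕ} (Y : A) (h : ¬ m ≤ k) : IsZero (truncObj k Y m) := by
  rw [truncObj, if_neg h]
  exact isZero_zero A

/-- Transition maps of the truncated constant tower. -/
noncomputable def truncSucc (k : ℕ) (Y : A) (m : ℕ) : truncObj k Y (m + 1) ⟶ truncObj k Y m :=
  if h : m + 1 ≤ k then
    eqToHom ((truncObj_eq_of_le Y h).trans (truncObj_eq_of_le Y (Nat.le_of_succ_le h)).symm)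
  else 0

/-- The truncated constant tower: `Y` in degrees `≤ k` and `0` above. -/
noncomputable abbrev trunc (k : ℕ) (Y : A) : ℕᵒᵖ ⥤ A where
  obj m := truncObj k Y m.unop
  map f := (Functor.ofOpSequence (truncSucc k Y)).map f
  map_id m := (Functor.ofOpSequence (truncSucc k Y)).map_id m
  map_comp f g := (Functor.ofOpSequence (truncSucc k Y)).map_comp f g

lemma trunc_obj (k : ℕ) (Y : A) (m : ℕ) : (trunc k Y).obj (op m) = truncObj k Y m := rfl

lemma trunc_map_succ (k : ℕ) (Y : A) (m : ℕ) :
    (trunc k Y).map (homOfLE (Nat.le_add_right m 1)).op = truncSucc k Y m :=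
  Functor.ofOpSequence_map_homOfLE_succ _ m

/-- The natural transformation `trunc k Y ⟶ I` determined by a map `Y ⟶ I_k`. -/
noncomputable def truncHom (k : ℕ) {Y : A} (I : ℕᵒᵖ ⥤ A) (g : Y ⟶ I.obj (op k)) : trunc k Y ⟶ I :=
  NatTrans.ofOpSequence
    (fun m => if h : m ≤ k then
        eqToHom (truncObj_eq_of_le Y h) ≫ g ≫ I.map (homOfLE h).op else 0)
    (by
      intro m
      rw [trunc_map_succ]
      beta_reduce
      by_cases h : m + 1 ≤ k
      · have h' : m ≤ k := Nat.le_of_succ_le h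
        rw [dif_pos h, dif_pos h', truncSucc, dif_pos h]
        simp [← Functor.map_comp, ← op_comp]
      · simp [truncSucc, h])

lemma truncHom_app (k : ℕ) {Y : A} (I : ℕᵒᵖ ⥤ A) (g : Y ⟶ I.obj (op k)) (m : ℕ) :
    (truncHom k I g).app (op m) = if h : m ≤ k then
      eqToHom (truncObj_eq_of_le Y h) ≫ g ≫ I.map (homOfLE h).op else 0 := rfl

/-- Functoriality of `trunc` in the value. -/
noncomputable def truncMap (k : ℕ) {X Y : A} (i : X ⟶ Y) : trunc k X ⟶ trunc k Y :=
  NatTrans.ofOpSequence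
    (fun m => if h : m ≤ k then
        eqToHom (truncObj_eq_of_le X h) ≫ i ≫ eqToHom (truncObj_eq_of_le Y h).symm else 0)
    (by
      intro m
      rw [trunc_map_succ, trunc_map_succ]
      beta_reduce
      by_cases h : m + 1 ≤ k
      · have h' : m ≤ k := Nat.le_of_succ_le h
        rw [dif_pos h, dif_pos h', truncSucc, truncSucc, dif_pos h, dif_pos h]
        simp
      · simp [truncSucc, h])

lemma truncMap_app (k : ℕ) {X Y : A} (i : X ⟶ Y) (m : ℕ) :
    (truncMap k i).app (op m) = if h : m ≤ k then
      eqToHom (truncObj_eq_of_le X h) ≫ i ≫ eqToHom (truncObj_eq_of_le Y h).symm else 0 := rfl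

instance truncMap_mono (k : ℕ) {X Y : A} (i : X ⟶ Y) [Mono i] : Mono (truncMap k i) := by
  have : ∀ (m : ℕᵒᵖ), Mono ((truncMap k i).app m) := by
    intro m
    obtain ⟨m⟩ := m
    rw [truncMap_app]
    by_cases h : m ≤ k
    · rw [dif_pos h]; infer_instance
    · rw [dif_neg h]
      exact ⟨fun {Z} f g _ => (isZero_truncObj X h).eq_of_tgt f g⟩
  exact NatTrans.mono_of_mono_app _

/-- The inclusion `trunc k Y ⟶ trunc (k+1) Y`. -/
noncomputable def truncLe (k : ℕ) (Y : A) : trunc k Y ⟶ trunc (k + 1) Y :=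
  NatTrans.ofOpSequence
    (fun m => if h : m ≤ k then
        eqToHom ((truncObj_eq_of_le Y h).trans
          (truncObj_eq_of_le Y (h.trans (Nat.le_succ k))).symm) else 0)
    (by
      intro m
      rw [trunc_map_succ, trunc_map_succ]
      beta_reduce
      by_cases h : m + 1 ≤ k
      · have h' : m ≤ k := Nat.le_of_succ_le h
        rw [dif_pos h, dif_pos h', truncSucc, truncSucc, dif_pos h,
          dif_pos (h.trans (Nat.le_succ k))]
        simp
      · simp [truncSucc, h])

lemma truncLe_app (k : ℕ) (Y : A) (m : ℕ) :
    (truncLe k Y).app (op m) = if h : m ≤ k then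
      eqToHom ((truncObj_eq_of_le Y h).trans
        (truncObj_eq_of_le Y (h.trans (Nat.le_succ k))).symm) else 0 := rfl

instance truncLe_mono (k : ℕ) (Y : A) : Mono (truncLe k Y) := by
  have : ∀ (m : ℕᵒᵖ), Mono ((truncLe k Y).app m) := by
    intro m
    obtain ⟨m⟩ := m
    rw [truncLe_app]
    by_cases h : m ≤ k
    · rw [dif_pos h]; infer_instance
    · rw [dif_neg h]
      exact ⟨fun {Z} f g _ => (isZero_truncObj Y h).eq_of_tgt f g⟩
  exact NatTrans.mono_of_mono_app _

end TowerAuxStmt0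

open TowerAuxStmt0

/-- If `A` is a Grothendieck abelian category (abelian, cocomplete, AB5, with a separator)
and a tower `I : ℕᵒᵖ ⥤ A` is an injective object of the category of towers, then each `I_n`
is injective in `A` and each structure map `I_{n+1} → I_n` is a split epimorphism. -/
theorem stmt_0 (A : Type*) [Category A] [Abelian A] [HasColimits A] [AB5 A] [HasSeparator A]
    (I : ℕᵒᵖ ⥤ A) (hI : Injective I) :
    (∀ n : ℕ, Injective (I.obj (Opposite.op n))) ∧
    (∀ n : ℕ, IsSplitEpi (I.map (homOfLE (Nat.le_succ n)).op)) := by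
  constructor
  · intro n
    constructor
    intro X Y g f hf
    obtain ⟨ψ, hψ⟩ := hI.factors (truncHom n I g) (truncMap n f)
    refine ⟨eqToHom (truncObj_eq_of_le Y (le_refl n)).symm ≫ ψ.app (op n), ?_⟩
    have key := congrArg (fun (η : trunc n X ⟶ I) => η.app (op n)) hψ
    simp only [NatTrans.comp_app, truncMap_app, truncHom_app, dif_pos (le_refl n),
      homOfLE_refl, op_id, CategoryTheory.Functor.map_id, Category.comp_id,
      Category.assoc] at key
    exact (cancel_epi (eqToHom (truncObj_eq_of_le X (le_refl n)))).mp key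
  · intro n
    obtain ⟨ψ, hψ⟩ := hI.factors (truncHom n I (𝟙 (I.obj (op n)))) (truncLe n (I.obj (op n)))
    refine ⟨⟨⟨eqToHom (truncObj_eq_of_le (I.obj (op n)) (le_refl (n + 1))).symm ≫
      ψ.app (op (n + 1)), ?_⟩⟩⟩
    have hnat := ψ.naturality (homOfLE (Nat.le_add_right n 1)).op
    rw [trunc_map_succ] at hnat
    have happ := congrArg (fun (η : trunc n (I.obj (op n)) ⟶ I) => η.app (op n)) hψ
    simp only [NatTrans.comp_app, truncLe_app, truncHom_app, dif_pos (le_refl n),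
      homOfLE_refl, op_id, CategoryTheory.Functor.map_id, Category.comp_id,
      Category.id_comp] at happ
    have hmap : (homOfLE (Nat.le_succ n)).op = (homOfLE (Nat.le_add_right n 1)).op := rfl
    have hψn : ψ.app (op n) = eqToHom ((truncObj_eq_of_le (I.obj (op n)) (le_refl n)).trans
        (truncObj_eq_of_le (I.obj (op n)) ((le_refl n).trans (Nat.le_succ n))).symm).symm ≫
        eqToHom (truncObj_eq_of_le (I.obj (op n)) (le_refl n)) := by
      rw [← happ]
      simp
    rw [hmap, Category.assoc, ← hnat, truncSucc, dif_pos (le_refl (n + 1)), hψn]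
    simp
end

section
/- Let p be an odd prime, let ζ ∈ ℤ_p^× be a (p−1)-st root of unity whose reduction mod p generates (ℤ/p)^×, and set g = ζ(1+p). For a nonzero integer k divisible by p−1, write k = (p−1)p^n m with p ∤ m. Then the ℤ_p-linear map x ↦ (1 − g^k)x on ℤ_p is injective with cokernel isomorphic to ℤ/p^{n+1}; and if (p−1) ∤ k, this map is bijective. -/
private lemma padic_unit_of_not_dvd {p : ℕ} [Fact p.Prime] {c : ℤ} (hc : ¬ (p:ℤ) ∣ c) :
    IsUnit (c : PadicInt p) := by
  rw [PadicInt.isUnit_iff]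
  refine le_antisymm (PadicInt.norm_le_one _) ?_
  by_contra h
  push_neg at h
  exact hc ((PadicInt.norm_int_lt_one_iff_dvd c).mp h)

private lemma keyA (p : ℕ) [Fact p.Prime] (hodd : p ≠ 2) (n K M : ℕ)
    (hK : K = (p-1) * p^n * M) (hM : M ≠ 0) (hpM : ¬ p ∣ M) :
    ∃ c : ℕ, ¬ p ∣ c ∧ (p+1)^K - 1 = p^(n+1) * c := by
  have hp := (Fact.out : p.Prime)
  have hp2 : 2 ≤ p := hp.two_le
  have hpodd : Odd p := hp.odd_of_ne_two hodd
  have hK0 : K ≠ 0 := by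
    subst hK
    exact Nat.mul_ne_zero (Nat.mul_ne_zero (by omega) (pow_ne_zero _ (by omega))) hM
  have hx : ¬ p ∣ (p+1) := by
    intro h
    have : p ∣ 1 := (Nat.dvd_add_right (dvd_refl p)).mp h
    have := Nat.le_of_dvd one_pos this
    omega
  have hval : padicValNat p ((p+1)^K - 1^K) = padicValNat p ((p+1) - 1) + padicValNat p K :=
    padicValNat.pow_sub_pow hpodd (by omega) (by simp) hx hK0
  have hvK : padicValNat p K = n := by
    subst hK
    have h1 : ¬ p ∣ (p - 1) := by intro h; have := Nat.le_of_dvd (by omega) h; omega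
    rw [padicValNat.mul (Nat.mul_ne_zero (by omega) (pow_ne_zero _ (by omega))) hM,
      padicValNat.mul (by omega) (pow_ne_zero _ (by omega)),
      padicValNat.eq_zero_of_not_dvd h1, padicValNat.prime_pow,
      padicValNat.eq_zero_of_not_dvd hpM]
    omega
  have hN0 : (p+1)^K - 1 ≠ 0 := by
    have : 1 < (p+1)^K := Nat.one_lt_pow hK0 (by omega)
    omega
  simp only [one_pow] at hval
  rw [hvK, Nat.add_sub_cancel, padicValNat.self (by omega)] at hval
  refine ⟨((p+1)^K - 1) / p ^ (n+1), ?_, ?_⟩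
  · have := Nat.not_dvd_ordCompl hp hN0
    rwa [Nat.factorization_def _ hp, hval, add_comm 1 n] at this
  · have := Nat.ordProj_mul_ordCompl_eq_self ((p+1)^K - 1) p
    rw [Nat.factorization_def _ hp, hval, add_comm 1 n] at this
    omega

private lemma keyB (p : ℕ) [Fact p.Prime] (hodd : p ≠ 2) (u : (PadicInt p)ˣ)
    (hu : (u : PadicInt p) = 1 + p) (n : ℕ) (m : ℤ) (hm : m ≠ 0) (hpm : ¬ (p:ℤ) ∣ m) :
    ∃ w : (PadicInt p)ˣ,
      1 - (↑(u ^ (((p:ℤ)-1) * (p:ℤ)^n * m)) : PadicInt p) = (p : PadicInt p)^(n+1) * w := by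
  have hp := (Fact.out : p.Prime)
  have hp3 : 2 < p := lt_of_le_of_ne hp.two_le (Ne.symm hodd)
  -- first handle positive m
  have pos_case : ∀ m' : ℤ, 0 < m' → ¬ (p:ℤ) ∣ m' →
      ∃ w : (PadicInt p)ˣ,
      1 - (↑(u ^ (((p:ℤ)-1) * (p:ℤ)^n * m')) : PadicInt p) = (p : PadicInt p)^(n+1) * w := by
    intro m' hm' hpm'
    set k : ℤ := ((p:ℤ)-1) * (p:ℤ)^n * m' with hk_def
    have hkpos : 0 < k := by
      apply mul_pos (mul_pos (by omega) (by positivity)) hm'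
    set K : ℕ := k.toNat with hK_def
    have hKz : (K : ℤ) = k := Int.toNat_of_nonneg hkpos.le
    have hKnat : K = (p-1) * p^n * m'.toNat := by
      have h2 : (((p-1) * p^n * m'.toNat : ℕ) : ℤ) = (K:ℤ) := by
        push_cast [Nat.cast_sub hp.one_le, Int.toNat_of_nonneg hm'.le, hKz, hk_def]
        ring
      exact_mod_cast h2.symm
    have hM0 : m'.toNat ≠ 0 := by omega
    have hpM : ¬ p ∣ m'.toNat := by
      intro h
      apply hpm'
      have := Int.natCast_dvd_natCast.mpr h
      rwa [Int.toNat_of_nonneg hm'.le] at this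
    obtain ⟨c, hc, hceq⟩ := keyA p hodd n K m'.toNat hKnat hM0 hpM
    have hcast : ((p+1:ℕ)^K : PadicInt p) - 1 = (p : PadicInt p)^(n+1) * (c : ℕ) := by
      have h1 : 1 ≤ (p+1)^K := Nat.one_le_pow _ _ (by omega)
      have := congrArg (fun t : ℕ => (t : PadicInt p)) hceq
      rw [Nat.cast_sub h1] at this
      push_cast at this ⊢
      linear_combination this
    obtain ⟨v, hv⟩ := padic_unit_of_not_dvd (p := p) (c := (c:ℤ))
      (by exact_mod_cast hc)
    have huK : (↑(u ^ k) : PadicInt p) = ((p+1:ℕ) : PadicInt p)^K := by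
      rw [← hKz, zpow_natCast, Units.val_pow_eq_pow_val, hu]
      push_cast
      ring
    refine ⟨-v, ?_⟩
    rw [huK]
    have hvc : (v : PadicInt p) = ((c:ℕ) : PadicInt p) := by
      rw [hv]; push_cast; ring
    rw [Units.val_neg, hvc]
    push_cast at hcast ⊢
    linear_combination -hcast
  rcases lt_or_gt_of_ne hm with hneg | hposm
  · obtain ⟨w, hw⟩ := pos_case (-m) (by omega) (by simpa using hpm)
    set k : ℤ := ((p:ℤ)-1) * (p:ℤ)^n * m with hk_def
    have hnegk : ((p:ℤ)-1) * (p:ℤ)^n * (-m) = -k := by rw [hk_def]; ring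
    rw [hnegk] at hw
    have hinv : u ^ k = (u ^ (-k))⁻¹ := by rw [← zpow_neg, neg_neg]
    refine ⟨-((u ^ (-k))⁻¹ * w), ?_⟩
    have hcancel : (↑((u ^ (-k))⁻¹) : PadicInt p) * ↑(u ^ (-k)) = 1 := by
      rw [← Units.val_mul, inv_mul_cancel, Units.val_one]
    rw [hinv, Units.val_neg, Units.val_mul]
    have : (↑(u ^ (-k)) : PadicInt p) = 1 - (p : PadicInt p)^(n+1) * w := by
      linear_combination -hw
    calc 1 - (↑((u ^ (-k))⁻¹) : PadicInt p)
        = (↑((u ^ (-k))⁻¹) : PadicInt p) * (↑(u ^ (-k)) - 1) + 1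
          - (↑((u ^ (-k))⁻¹) : PadicInt p) * ↑(u ^ (-k)) := by ring
      _ = (↑((u ^ (-k))⁻¹) : PadicInt p) * (↑(u ^ (-k)) - 1) := by rw [hcancel]; ring
      _ = _ := by rw [this]; ring
  · exact pos_case m hposm hpm

private lemma quotIso (p : ℕ) [Fact p.Prime] (j : ℕ) :
    Nonempty ((PadicInt p ⧸ Ideal.span {(p : PadicInt p)^j}) ≃+ ZMod (p^j)) := by
  have hsurj : Function.Surjective (PadicInt.toZModPow (p := p) j) := by
    intro y
    obtain ⟨a, rfl⟩ := ZMod.intCast_surjective y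
    exact ⟨a, map_intCast _ a⟩
  have e := RingHom.quotientKerEquivOfSurjective hsurj
  exact ⟨((Ideal.quotEquivOfEq (by rw [PadicInt.ker_toZModPow])).trans e).toAddEquiv⟩

/-- Let `p` be an odd prime, `ζ ∈ ℤ_p^×` a `(p−1)`-st root of unity whose reduction mod `p`
generates `(ℤ/p)^×`, and `g = ζ(1+p)`.  For a nonzero integer `k` written as
`k = (p−1)p^n m` with `p ∤ m`, the map `x ↦ (1 − g^k)x` on `ℤ_p` is injective with cokernel
isomorphic to `ℤ/p^{n+1}`; and if `(p−1) ∤ k`, this map is bijective. -/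
theorem stmt_7 (p : ℕ) [Fact p.Prime] (hodd : p ≠ 2)
    (ζ : (PadicInt p)ˣ) (hζ : ζ ^ (p - 1) = 1)
    (hgen : orderOf (PadicInt.toZMod (ζ : PadicInt p)) = p - 1)
    (g : (PadicInt p)ˣ) (hg : (g : PadicInt p) = (ζ : PadicInt p) * (1 + (p : PadicInt p)))
    (k : ℤ) (hk : k ≠ 0) :
    (∀ (n : ℕ) (m : ℤ), k = ((p : ℤ) - 1) * (p : ℤ) ^ n * m → ¬ ((p : ℤ) ∣ m) →
      Function.Injective (fun x : PadicInt p => (1 - (↑(g ^ k) : PadicInt p)) * x) ∧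
      Nonempty ((PadicInt p ⧸ Ideal.span {1 - (↑(g ^ k) : PadicInt p)}) ≃+
        ZMod (p ^ (n + 1)))) ∧
    (¬ ((p : ℤ) - 1 ∣ k) →
      Function.Bijective (fun x : PadicInt p => (1 - (↑(g ^ k) : PadicInt p)) * x)) := by
  have hp := (Fact.out : p.Prime)
  have hp3 : 2 < p := lt_of_le_of_ne hp.two_le (Ne.symm hodd)
  set u : (PadicInt p)ˣ := ζ⁻¹ * g with hu_def
  have hu : (u : PadicInt p) = 1 + p := by
    have h1 : (↑(ζ⁻¹) : PadicInt p) * ↑ζ = 1 := by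
      rw [← Units.val_mul, inv_mul_cancel, Units.val_one]
    rw [hu_def, Units.val_mul, hg, ← mul_assoc, h1, one_mul]
  have hgeq : g = ζ * u := by rw [hu_def, ← mul_assoc, mul_inv_cancel, one_mul]
  have hpm1 : ((p:ℤ) - 1) = ((p - 1 : ℕ) : ℤ) := by
    have := hp.one_le; push_cast [Nat.cast_sub this]; ring
  have hgu : ∀ j : ℤ, ((p:ℤ)-1) ∣ j → g ^ j = u ^ j := by
    intro j hj
    obtain ⟨t, ht⟩ := hj
    have hζj : ζ ^ j = 1 := by
      rw [ht, hpm1, zpow_mul, zpow_natCast, hζ, one_zpow]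
    rw [hgeq, mul_zpow, hζj, one_mul]
  constructor
  · intro n m hkm hpm
    have hdvd : ((p:ℤ)-1) ∣ k := ⟨(p:ℤ)^n * m, by rw [hkm]; ring⟩
    have hm0 : m ≠ 0 := by
      rintro rfl
      rw [mul_zero] at hkm
      exact hk hkm
    obtain ⟨w, hw⟩ := keyB p hodd u hu n m hm0 hpm
    rw [← hkm] at hw
    have hgk : (↑(g^k) : PadicInt p) = ↑(u^k) := by rw [hgu k hdvd]
    have hassoc : Associated ((p:PadicInt p)^(n+1)) (1 - (↑(g^k) : PadicInt p)) := by
      rw [hgk]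
      exact ⟨w, hw.symm⟩
    have pne : ((p:PadicInt p))^(n+1) ≠ 0 :=
      pow_ne_zero _ (Nat.cast_ne_zero.mpr hp.ne_zero)
    constructor
    · have hne : (1 - (↑(g^k) : PadicInt p)) ≠ 0 := by
        obtain ⟨w', hw'⟩ := hassoc
        intro h0
        rw [h0] at hw'
        rcases mul_eq_zero.mp hw' with h | h
        · exact pne h
        · exact w'.ne_zero h
      exact mul_right_injective₀ hne
    · have hspan : Ideal.span {1 - (↑(g^k) : PadicInt p)}
          = Ideal.span {(p:PadicInt p)^(n+1)} :=
        (Ideal.span_singleton_eq_span_singleton.mpr hassoc).symm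
      obtain ⟨e⟩ := quotIso p (n+1)
      exact ⟨(Ideal.quotEquivOfEq hspan).toAddEquiv.trans e⟩
  · intro hnd
    have hunit : IsUnit (1 - (↑(g^k) : PadicInt p)) := by
      rw [PadicInt.isUnit_iff]
      refine le_antisymm (PadicInt.norm_le_one _) ?_
      by_contra hlt
      push_neg at hlt
      rw [PadicInt.norm_lt_one_iff_dvd] at hlt
      have h0 : PadicInt.toZMod (1 - (↑(g^k) : PadicInt p)) = 0 := by
        rw [← RingHom.mem_ker, PadicInt.ker_toZMod, PadicInt.maximalIdeal_eq_span_p,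
          Ideal.mem_span_singleton]
        exact hlt
      set φ := Units.map (PadicInt.toZMod (p := p)).toMonoidHom with hφ_def
      have h1 : PadicInt.toZMod (↑(g^k) : PadicInt p) = 1 := by
        rw [map_sub, map_one, sub_eq_zero] at h0
        exact h0.symm
      have hφval : (↑(φ (g^k)) : ZMod p) = PadicInt.toZMod (↑(g^k) : PadicInt p) := rfl
      have hpow : φ (g^k) = 1 := Units.ext (by rw [hφval, h1, Units.val_one])
      rw [map_zpow] at hpow
      have hord : orderOf (φ g) = p - 1 := by
        rw [← orderOf_units]
        have hcoe : (↑(φ g) : ZMod p) = PadicInt.toZMod (ζ : PadicInt p) := by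
          show PadicInt.toZMod (↑g : PadicInt p) = _
          rw [hg, map_mul, map_add, map_one, map_natCast, ZMod.natCast_self, add_zero, mul_one]
        rw [hcoe, hgen]
      have hdvd : ((p - 1 : ℕ) : ℤ) ∣ k := by
        rw [← hord]
        exact orderOf_dvd_iff_zpow_eq_one.mpr hpow
      exact hnd (by rwa [hpm1])
    obtain ⟨v, hv⟩ := hunit
    simp only [← hv]
    exact (Units.mulLeft v).bijective
end
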